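/- Let Λ(s) = s²/2 + log(2Φ(s)), Λ*(y) = sup_{s∈ℝ}(sy − Λ(s)), and for γ ∈ (0,1) let ξ_γ(y) = ((1−γ)/γ)·y²/2 + Λ*(y), with unique minimizer y_γ ∈ (0, √(2/π)). Then as γ → 0⁺: (i) y_γ / √(γ/(1−γ)) → 1, and (ii) ξ_γ(y_γ) / ((1/2)·log((1−γ)/γ)) → 1. -/

import Mathlib

/-- The standard normal cumulative distribution function. -/
noncomputable def Phi (s : ℝ) : ℝ :=
  (1 / Real.sqrt (2 * Real.pi)) * ∫ t in Set.Iic s, Real.exp (-t ^ 2 / 2)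

/-- The cumulant generating function of a standard half-normal random variable. -/
noncomputable def Lam (s : ℝ) : ℝ := s ^ 2 / 2 + Real.log (2 * Phi s)

/-- The Legendre transform (large deviation rate function) of `Lam`. -/
noncomputable def LamStar (y : ℝ) : ℝ := ⨆ s : ℝ, (s * y - Lam s)

/-- `ξ_γ(y) = ((1-γ)/γ)·y²/2 + Λ*(y)`. -/
noncomputable def xiFn (γ y : ℝ) : ℝ := ((1 - γ) / γ) * y ^ 2 / 2 + LamStar y

open Real MeasureTheory Set Filter

lemma gauss_integrable : Integrable (fun x : ℝ => Real.exp (-x^2/2)) := by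
  have h := integrable_exp_neg_mul_sq (b := (1/2:ℝ)) (by norm_num)
  refine h.congr' ?_ ?_
  · exact h.aestronglyMeasurable.congr (by filter_upwards with x; ring_nf)
  · filter_upwards with x; ring_nf

lemma gauss_total : ∫ x : ℝ, Real.exp (-x^2/2) = Real.sqrt (2*π) := by
  have h := integral_gaussian (1/2:ℝ)
  rw [show (π / (1/2:ℝ)) = 2*π by ring] at h
  rw [← h]; congr 1 with x; ring_nf

noncomputable def Gt (t : ℝ) : ℝ := ∫ x in Set.Ioi t, Real.exp (-x^2/2)

lemma tail_eq (t : ℝ) : (∫ x in Set.Iic (-t), Real.exp (-x^2/2)) = Gt t := by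
  rw [← integral_comp_neg_Ioi]
  exact setIntegral_congr_fun measurableSet_Ioi (fun x _ => by rw [neg_sq])

lemma Phi_neg_eq (t : ℝ) : Phi (-t) = (1 / Real.sqrt (2*π)) * Gt t := by
  unfold Phi; rw [tail_eq t]

lemma Phi_zero : Phi 0 = 1/2 := by
  have h : Phi (-(0:ℝ)) = (1 / Real.sqrt (2*π)) * Gt 0 := Phi_neg_eq 0
  rw [neg_zero] at h
  rw [h]
  unfold Gt
  have h2 : ∫ x in Set.Ioi (0:ℝ), Real.exp (-x^2/2) = Real.sqrt (2*π) / 2 := by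
    have h3 := integral_gaussian_Ioi (1/2:ℝ)
    rw [show (π / (1/2:ℝ)) = 2*π by ring] at h3
    rw [← h3]
    exact setIntegral_congr_fun measurableSet_Ioi (fun x _ => by ring_nf)
  rw [h2]
  field_simp

lemma Phi_mono : Monotone Phi := by
  intro a b hab
  unfold Phi
  apply mul_le_mul_of_nonneg_left ?_ (by positivity)
  exact setIntegral_mono_set gauss_integrable.integrableOn
    (Eventually.of_forall fun x => (Real.exp_pos _).le)
    (HasSubset.Subset.eventuallyLE (Iic_subset_Iic.2 hab))

lemma Phi_pos (s : ℝ) : 0 < Phi s := by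
  unfold Phi
  apply mul_pos (by positivity)
  rw [setIntegral_pos_iff_support_of_nonneg_ae
    (Eventually.of_forall fun x => (Real.exp_pos _).le) gauss_integrable.integrableOn]
  have : (Function.support fun t : ℝ => Real.exp (-t^2/2)) = Set.univ := by
    ext x; simp [Function.mem_support, Real.exp_ne_zero]
  rw [this, Set.univ_inter, Real.volume_Iic]
  exact ENNReal.zero_lt_top

lemma hasDerivAt_gauss (x : ℝ) :
    HasDerivAt (fun x : ℝ => Real.exp (-x^2/2)) (-x * Real.exp (-x^2/2)) x := by
  have h : HasDerivAt (fun x : ℝ => -x^2/2) (-x) x := by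
    have := ((hasDerivAt_pow 2 x).neg.div_const 2)
    exact this.congr_deriv (by norm_num; ring)
  simpa [mul_comm] using h.exp

lemma integrableOn_x_gauss (t : ℝ) :
    IntegrableOn (fun x : ℝ => x * Real.exp (-x^2/2)) (Set.Ioi t) := by
  have h := integrable_rpow_mul_exp_neg_mul_sq (b:=(1/2:ℝ)) (by norm_num) (s:=(1:ℝ)) (by norm_num)
  have h2 : Integrable (fun x : ℝ => x * Real.exp (-x^2/2)) := by
    refine h.congr (Eventually.of_forall fun x => ?_)
    show x ^ (1:ℝ) * Real.exp (-(1/2)*x^2) = x * Real.exp (-x^2/2)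
    rw [Real.rpow_one]; ring_nf
  exact h2.integrableOn

lemma integral_x_gauss (t : ℝ) :
    ∫ x in Set.Ioi t, x * Real.exp (-x^2/2) = Real.exp (-t^2/2) := by
  have hd : ∀ x ∈ Set.Ici t, HasDerivAt (fun x : ℝ => -Real.exp (-x^2/2))
      (x * Real.exp (-x^2/2)) x := by
    intro x _
    exact (hasDerivAt_gauss x).neg.congr_deriv (by ring)
  have htend : Tendsto (fun x : ℝ => -Real.exp (-x^2/2)) atTop (nhds 0) := by
    have h1 : Tendsto (fun x : ℝ => -x^2/2) atTop atBot := by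
      apply Tendsto.atBot_div_const (by norm_num : (0:ℝ) < 2)
      simpa using (tendsto_pow_atTop (two_ne_zero)).neg
    simpa using (Real.tendsto_exp_atBot.comp h1).neg
  have := integral_Ioi_of_hasDerivAt_of_tendsto' hd (integrableOn_x_gauss t) htend
  rw [this]; ring

lemma Gt_le (t : ℝ) (ht : 0 < t) : Gt t ≤ Real.exp (-t^2/2) / t := by
  have h1 : Gt t ≤ ∫ x in Set.Ioi t, (1/t) * (x * Real.exp (-x^2/2)) := by
    refine setIntegral_mono_on gauss_integrable.integrableOn
      ((integrableOn_x_gauss t).const_mul (1/t)) measurableSet_Ioi ?_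
    intro x hx
    have hx' : t < x := hx
    have h2 : 1 ≤ x / t := (one_le_div ht).2 hx'.le
    have h3 := (Real.exp_pos (-x^2/2)).le
    have : Real.exp (-x^2/2) ≤ (x/t) * Real.exp (-x^2/2) := le_mul_of_one_le_left h3 h2
    calc Real.exp (-x^2/2) ≤ (x/t) * Real.exp (-x^2/2) := this
      _ = (1/t) * (x * Real.exp (-x^2/2)) := by ring
  rw [integral_const_mul, integral_x_gauss] at h1
  calc Gt t ≤ (1/t) * Real.exp (-t^2/2) := h1
    _ = Real.exp (-t^2/2) / t := by ring

lemma hasDerivAt_mills (x : ℝ) :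
    HasDerivAt (fun x : ℝ => -((x/(1+x^2)) * Real.exp (-x^2/2)))
      (Real.exp (-x^2/2) * ((x^4 + 2*x^2 - 1)/(1+x^2)^2)) x := by
  have hne : (1 + x^2) ≠ 0 := by positivity
  have hg : HasDerivAt (fun x : ℝ => x/(1+x^2)) ((1-x^2)/(1+x^2)^2) x := by
    have h1 : HasDerivAt (fun x : ℝ => (1:ℝ)+x^2) (2*x) x := by
      simpa using ((hasDerivAt_pow 2 x).const_add 1)
    have := (hasDerivAt_id x).div h1 hne
    exact this.congr_deriv (by simp only [id]; ring)
  have := (hg.mul (hasDerivAt_gauss x)).neg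
  exact this.congr_deriv (by field_simp; ring)

lemma le_Gt (t : ℝ) (ht : 0 < t) : (t/(1+t^2)) * Real.exp (-t^2/2) ≤ Gt t := by
  have hint : IntegrableOn
      (fun x : ℝ => Real.exp (-x^2/2) * ((x^4 + 2*x^2 - 1)/(1+x^2)^2)) (Set.Ioi t) := by
    refine Integrable.mono' gauss_integrable.integrableOn ?_
      (Eventually.of_forall fun x => ?_)
    · apply Continuous.aestronglyMeasurable
      fun_prop (disch := intro x; positivity)
    · rw [norm_mul, Real.norm_eq_abs, Real.abs_exp]
      have h2 : |(x^4 + 2*x^2 - 1)/(1+x^2)^2| ≤ 1 := by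
        rw [abs_div, abs_of_nonneg (by positivity : (0:ℝ) ≤ (1+x^2)^2), div_le_one (by positivity)]
        rw [abs_le]; constructor <;> nlinarith [sq_nonneg x, sq_nonneg (x^2)]
      calc Real.exp (-x^2/2) * |(x^4 + 2*x^2 - 1)/(1+x^2)^2|
          ≤ Real.exp (-x^2/2) * 1 := by
            exact mul_le_mul_of_nonneg_left h2 (Real.exp_pos _).le
        _ = Real.exp (-x^2/2) := mul_one _
  have htend : Tendsto (fun x : ℝ => -((x/(1+x^2)) * Real.exp (-x^2/2))) atTop (nhds 0) := by
    have h1 : Tendsto (fun x : ℝ => x/(1+x^2)) atTop (nhds 0) := by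
      have h2 : Tendsto (fun x : ℝ => (1+x^2)/x) atTop atTop := by
        apply tendsto_atTop_mono' _ _ tendsto_id
        filter_upwards [eventually_ge_atTop (1:ℝ)] with x hx
        show id x ≤ (1 + x^2)/x
        rw [id, le_div_iff₀ (by linarith)]
        nlinarith
      have h3 := h2.inv_tendsto_atTop
      apply h3.congr'
      filter_upwards [eventually_ge_atTop (1:ℝ)] with x hx
      show ((1 + x^2)/x)⁻¹ = x / (1 + x^2)
      rw [inv_div]
    have h4 : Tendsto (fun x : ℝ => Real.exp (-x^2/2)) atTop (nhds 0) := by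
      have h5 : Tendsto (fun x : ℝ => -x^2/2) atTop atBot := by
        apply Tendsto.atBot_div_const (by norm_num : (0:ℝ) < 2)
        simpa using (tendsto_pow_atTop (two_ne_zero)).neg
      exact Real.tendsto_exp_atBot.comp h5
    simpa using (h1.mul h4).neg
  have heq := integral_Ioi_of_hasDerivAt_of_tendsto'
    (fun x _ => hasDerivAt_mills x) hint htend
  have h6 : (∫ x in Set.Ioi t, Real.exp (-x^2/2) * ((x^4 + 2*x^2 - 1)/(1+x^2)^2))
      ≤ Gt t := by
    refine setIntegral_mono_on hint gauss_integrable.integrableOn measurableSet_Ioi ?_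
    intro x _
    have h2 : (x^4 + 2*x^2 - 1)/(1+x^2)^2 ≤ 1 := by
      rw [div_le_one (by positivity)]; nlinarith [sq_nonneg x]
    calc Real.exp (-x^2/2) * ((x^4 + 2*x^2 - 1)/(1+x^2)^2)
        ≤ Real.exp (-x^2/2) * 1 := mul_le_mul_of_nonneg_left h2 (Real.exp_pos _).le
      _ = Real.exp (-x^2/2) := mul_one _
  rw [heq] at h6
  linarith

noncomputable def Kc : ℝ := Real.log (2 / Real.sqrt (2*π))
noncomputable def c0 : ℝ := -1 - Kc

lemma two_phi_pos (s : ℝ) : 0 < 2 * Phi s := by linarith [Phi_pos s]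

lemma Lam_neg_le (t : ℝ) (ht : 0 < t) : Lam (-t) ≤ Kc - Real.log t := by
  unfold Lam
  have h1 : 2 * Phi (-t) ≤ (2 / Real.sqrt (2*π)) * (Real.exp (-t^2/2)/t) := by
    rw [Phi_neg_eq]
    have := Gt_le t ht
    calc 2 * (1 / Real.sqrt (2*π) * Gt t)
        = (2 / Real.sqrt (2*π)) * Gt t := by ring
      _ ≤ (2 / Real.sqrt (2*π)) * (Real.exp (-t^2/2)/t) := by
          apply mul_le_mul_of_nonneg_left this (by positivity)
  have h2 := Real.log_le_log (two_phi_pos _) h1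
  have h3 : Real.log ((2 / Real.sqrt (2*π)) * (Real.exp (-t^2/2)/t))
      = Kc + (-t^2/2 - Real.log t) := by
    rw [Real.log_mul (by positivity) (by positivity), Real.log_div (Real.exp_ne_zero _) ht.ne',
      Real.log_exp]
    rfl
  rw [h3] at h2
  have : (-t)^2 = t^2 := by ring
  rw [this]
  linarith

lemma Lam_neg_ge (t : ℝ) (ht : 0 < t) :
    Kc + (Real.log t - Real.log (1 + t^2)) ≤ Lam (-t) := by
  unfold Lam
  have h1 : (2 / Real.sqrt (2*π)) * ((t/(1+t^2)) * Real.exp (-t^2/2)) ≤ 2 * Phi (-t) := by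
    rw [Phi_neg_eq]
    have := le_Gt t ht
    calc (2 / Real.sqrt (2*π)) * ((t/(1+t^2)) * Real.exp (-t^2/2))
        ≤ (2 / Real.sqrt (2*π)) * Gt t := by
          apply mul_le_mul_of_nonneg_left this (by positivity)
      _ = 2 * (1 / Real.sqrt (2*π) * Gt t) := by ring
  have h2 := Real.log_le_log (by positivity) h1
  have h3 : Real.log ((2 / Real.sqrt (2*π)) * ((t/(1+t^2)) * Real.exp (-t^2/2)))
      = Kc + ((Real.log t - Real.log (1+t^2)) + -t^2/2) := by
    rw [Real.log_mul (by positivity) (by positivity),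
      Real.log_mul (by positivity) (Real.exp_ne_zero _),
      Real.log_div ht.ne' (by positivity), Real.log_exp]
    rfl
  rw [h3] at h2
  have : (-t)^2 = t^2 := by ring
  rw [this]
  linarith

lemma pointwise_bound (T y s : ℝ) (hT : 1 ≤ T) (hy : 0 < y) (hy1 : y ≤ 1) :
    s * y - Lam s ≤ max (max (1/2) (-Real.log (2 * Phi (-T))))
      (Real.log (1/y) + c0 + Real.log (1 + 1/T^2)) := by
  rcases le_or_gt 0 s with hs | hs
  · -- s ≥ 0 : bound by 1/2
    apply le_trans _ (le_max_of_le_left (le_max_left _ _))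
    have hlog : 0 ≤ Real.log (2 * Phi s) := by
      apply Real.log_nonneg
      have := Phi_mono hs
      rw [Phi_zero] at this
      linarith
    unfold Lam
    nlinarith [sq_nonneg (s - y)]
  · set t := -s with hts
    have ht : 0 < t := by simp [hts]; linarith
    have hsy : s * y ≤ 0 := mul_nonpos_of_nonpos_of_nonneg (by linarith) hy.le
    rcases le_or_gt t T with htT | htT
    · -- 0 < t ≤ T
      apply le_trans _ (le_max_of_le_left (le_max_right _ _))
      have hmono : Phi (-T) ≤ Phi (-t) := Phi_mono (by linarith)
      have hlog : Real.log (2 * Phi (-T)) ≤ Real.log (2 * Phi (-t)) :=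
        Real.log_le_log (two_phi_pos _) (by linarith)
      have hs' : s = -t := by simp [hts]
      rw [hs']
      unfold Lam
      have h2 : (0:ℝ) ≤ (-t)^2/2 := by positivity
      have : (-t) * y ≤ 0 := by
        apply mul_nonpos_of_nonpos_of_nonneg (by linarith) hy.le
      linarith
    · -- t > T ≥ 1
      apply le_trans _ (le_max_right _ _)
      have hs' : s = -t := by simp [hts]
      rw [hs']
      have hL := Lam_neg_ge t ht
      have hT0 : (0:ℝ) < T := by linarith
      -- log (1+t²) = 2 log t + log (1 + 1/t²)
      have hsplit : Real.log (1 + t^2) = 2 * Real.log t + Real.log (1 + 1/t^2) := by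
        have h1 : 1 + t^2 = t^2 * (1 + 1/t^2) := by field_simp; ring
        rw [h1, Real.log_mul (by positivity) (by positivity), Real.log_pow]
        push_cast; ring
      have hlogty : Real.log t ≤ t * y + Real.log (1/y) - 1 := by
        have h1 := Real.log_le_sub_one_of_pos (mul_pos ht hy)
        rw [Real.log_mul ht.ne' hy.ne'] at h1
        rw [Real.log_div one_ne_zero hy.ne', Real.log_one]
        linarith
      have hmono2 : Real.log (1 + 1/t^2) ≤ Real.log (1 + 1/T^2) := by
        apply Real.log_le_log (by positivity)
        have : 1/t^2 ≤ 1/T^2 := by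
          apply one_div_le_one_div_of_le (by positivity)
          nlinarith
        linarith
      unfold c0 at *
      have : (-t) * y = -(t*y) := by ring
      rw [this]
      linarith

lemma bdd_above_range (y : ℝ) (hy : 0 < y) (hy1 : y ≤ 1) :
    BddAbove (Set.range fun s : ℝ => s * y - Lam s) := by
  refine ⟨max (max (1/2) (-Real.log (2 * Phi (-1)))) (Real.log (1/y) + c0 + Real.log (1 + 1/1^2)), ?_⟩
  rintro x ⟨s, rfl⟩
  exact pointwise_bound 1 y s le_rfl hy hy1

lemma LamStar_ge (y : ℝ) (hy : 0 < y) (hy1 : y ≤ 1) :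
    Real.log (1/y) + c0 ≤ LamStar y := by
  have hb := bdd_above_range y hy hy1
  have h1 := le_ciSup hb (-(1/y))
  refine le_trans ?_ h1
  have h2 := Lam_neg_le (1/y) (by positivity)
  have h3 : (-(1/y)) * y = -1 := by field_simp
  rw [h3]
  unfold c0
  linarith

lemma LamStar_le (T y : ℝ) (hT : 1 ≤ T) (hy : 0 < y) (hy1 : y ≤ 1)
    (h1 : 1/2 ≤ Real.log (1/y) + c0 + Real.log (1 + 1/T^2))
    (h2 : -Real.log (2 * Phi (-T)) ≤ Real.log (1/y) + c0 + Real.log (1 + 1/T^2)) :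
    LamStar y ≤ Real.log (1/y) + c0 + Real.log (1 + 1/T^2) := by
  apply ciSup_le
  intro s
  refine le_trans (pointwise_bound T y s hT hy hy1) ?_
  rw [max_le_iff, max_le_iff]
  exact ⟨⟨h1, h2⟩, le_rfl⟩

lemma sqrt_two_div_pi_le_one : Real.sqrt (2/π) ≤ 1 := by
  rw [show (1:ℝ) = Real.sqrt 1 by simp]
  apply Real.sqrt_le_sqrt
  rw [div_le_one Real.pi_pos]
  linarith [Real.pi_gt_three]

lemma hu_facts (u ε : ℝ) (hu : 0 < u) (h : u^2/2 - Real.log u ≤ 1/2 + ε) :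
    (u - 1)^2 ≤ 2*ε ∧ 1/2 ≤ u^2/2 - Real.log u := by
  have hlogu := Real.log_le_sub_one_of_pos hu
  constructor <;> nlinarith [sq_nonneg (u-1)]

lemma central (γ ε T yv : ℝ) (hγ : γ ∈ Set.Ioo (0:ℝ) 1) (hε : 0 < ε) (hT : 1 ≤ T)
    (hyv : yv ∈ Set.Ioo (0:ℝ) (Real.sqrt (2/π)))
    (hmin : ∀ t ∈ Set.Ioi (0:ℝ), xiFn γ yv ≤ xiFn γ t)
    (hTe : Real.log (1 + 1/T^2) ≤ ε)
    (ht01 : Real.sqrt (γ/(1-γ)) ≤ 1)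
    (hcond1 : 1/2 ≤ Real.log ((1-γ)/γ) / 2 + c0)
    (hcond2 : -Real.log (2 * Phi (-T)) ≤ Real.log ((1-γ)/γ) / 2 + c0) :
    (yv * Real.sqrt ((1-γ)/γ) - 1)^2 ≤ 2*ε ∧
    1/2 + c0 + Real.log ((1-γ)/γ) / 2 ≤ xiFn γ yv ∧
    xiFn γ yv ≤ 1/2 + c0 + ε + Real.log ((1-γ)/γ) / 2 := by
  obtain ⟨hγ0, hγ1⟩ := hγ
  obtain ⟨hyv0, hyv2⟩ := hyv
  have h1γ : 0 < 1 - γ := by linarith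
  set b : ℝ := (1-γ)/γ with hbdef
  have hb : 0 < b := by positivity
  set t₀ : ℝ := Real.sqrt (γ/(1-γ)) with ht₀def
  have ht₀ : 0 < t₀ := Real.sqrt_pos.2 (by positivity)
  have ht₀sq : t₀^2 = γ/(1-γ) := Real.sq_sqrt (by positivity)
  have hbt₀ : b * t₀^2 = 1 := by
    rw [ht₀sq, hbdef]; field_simp
  set sb : ℝ := Real.sqrt b with hsbdef
  have hsb : 0 < sb := Real.sqrt_pos.2 hb
  have hsbsq : sb^2 = b := Real.sq_sqrt hb.le
  have hsbt₀ : sb * t₀ = 1 := by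
    rw [hsbdef, ht₀def, ← Real.sqrt_mul hb.le]
    rw [show b * (γ/(1-γ)) = 1 by rw [hbdef]; field_simp]
    exact Real.sqrt_one
  set u : ℝ := yv * sb with hudef
  have hu : 0 < u := mul_pos hyv0 hsb
  have hyvu : yv = u * t₀ := by
    rw [hudef]
    rw [mul_assoc, hsbt₀, mul_one]
  have hu2 : u^2 = b * yv^2 := by rw [hudef]; rw [mul_pow, hsbsq]; ring
  have hyv1 : yv ≤ 1 := le_trans hyv2.le sqrt_two_div_pi_le_one
  -- the log of t₀
  have hlogt₀ : Real.log t₀ = -(Real.log b / 2) := by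
    rw [ht₀def, Real.log_sqrt (by positivity)]
    rw [show γ/(1-γ) = b⁻¹ by rw [hbdef]; rw [inv_div]]
    rw [Real.log_inv]; ring
  -- minimality at t₀
  have hm := hmin t₀ ht₀
  unfold xiFn at hm
  rw [← hbdef] at hm
  rw [mul_div_assoc, mul_div_assoc] at hm
  have hxt₀ : b * (t₀^2/2) = 1/2 := by rw [← mul_div_assoc, hbt₀]
  -- LamStar bounds
  have hge := LamStar_ge yv hyv0 hyv1
  have hcondA : 1/2 ≤ Real.log (1/t₀) + c0 + Real.log (1 + 1/T^2) := by
    have hl : 0 ≤ Real.log (1 + 1/T^2) := Real.log_nonneg (le_add_of_nonneg_right (by positivity))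
    rw [Real.log_div one_ne_zero ht₀.ne', Real.log_one, hlogt₀]
    linarith
  have hcondB : -Real.log (2 * Phi (-T)) ≤ Real.log (1/t₀) + c0 + Real.log (1 + 1/T^2) := by
    have hl : 0 ≤ Real.log (1 + 1/T^2) := Real.log_nonneg (le_add_of_nonneg_right (by positivity))
    rw [Real.log_div one_ne_zero ht₀.ne', Real.log_one, hlogt₀]
    linarith
  have hle := LamStar_le T t₀ hT ht₀ ht01 hcondA hcondB
  have hlogyv : Real.log yv = Real.log u + Real.log t₀ := by
    rw [hyvu, Real.log_mul hu.ne' ht₀.ne']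
  have hloginv : Real.log (1/yv) = -Real.log yv := by
    rw [Real.log_div one_ne_zero hyv0.ne', Real.log_one]; ring
  have hloginvt : Real.log (1/t₀) = -Real.log t₀ := by
    rw [Real.log_div one_ne_zero ht₀.ne', Real.log_one]; ring
  -- main chain
  have hchain : u^2/2 - Real.log u ≤ 1/2 + ε := by
    have h1 : b * (yv^2/2) + (Real.log (1/yv) + c0) ≤ b * (yv^2/2) + LamStar yv := by linarith
    have h2 : b * (t₀^2/2) + LamStar t₀ ≤ 1/2 + (Real.log (1/t₀) + c0 + Real.log (1 + 1/T^2)) := by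
      rw [hxt₀]; linarith
    have h3 := le_trans h1 (le_trans hm h2)
    rw [hloginv, hloginvt, hlogyv] at h3
    rw [show b * (yv^2/2) = u^2/2 by rw [← mul_div_assoc, ← hu2]] at h3
    linarith
  obtain ⟨hsq, hhu⟩ := hu_facts u ε hu hchain
  refine ⟨by rw [hudef] at hsq; exact hsq, ?_, ?_⟩
  · -- lower bound for xi
    have h1 : b * (yv^2/2) + (Real.log (1/yv) + c0) ≤ xiFn γ yv := by
      unfold xiFn
      rw [← hbdef, mul_div_assoc]
      linarith [hge]
    rw [hloginv, hlogyv, hlogt₀] at h1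
    rw [show b * (yv^2/2) = u^2/2 by rw [← mul_div_assoc, ← hu2]] at h1
    linarith
  · -- upper bound for xi
    have h2 : xiFn γ yv ≤ 1/2 + (Real.log (1/t₀) + c0 + Real.log (1 + 1/T^2)) := by
      unfold xiFn
      rw [← hbdef, mul_div_assoc]
      linarith [hm, hle, hxt₀]
    rw [hloginvt, hlogt₀] at h2
    linarith

lemma tendsto_b : Tendsto (fun γ : ℝ => (1-γ)/γ) (nhdsWithin 0 (Set.Ioo (0:ℝ) 1)) atTop := by
  have h1 : Tendsto (fun γ : ℝ => γ⁻¹) (nhdsWithin 0 (Set.Ioo (0:ℝ) 1)) atTop := by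
    refine tendsto_inv_nhdsGT_zero.mono_left (nhdsWithin_mono 0 ?_)
    exact fun x hx => hx.1
  have h2 := tendsto_atTop_add_const_right (nhdsWithin 0 (Set.Ioo (0:ℝ) 1)) (-1 : ℝ) h1
  apply h2.congr'
  filter_upwards [self_mem_nhdsWithin] with γ hγ
  rw [eq_div_iff hγ.1.ne']
  field_simp [hγ.1.ne']
  ring

lemma tendsto_D : Tendsto (fun γ : ℝ => Real.log ((1-γ)/γ))
    (nhdsWithin 0 (Set.Ioo (0:ℝ) 1)) atTop :=
  Real.tendsto_log_atTop.comp tendsto_b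

lemma eventually_central (y : ℝ → ℝ)
    (hy : ∀ γ ∈ Set.Ioo (0:ℝ) 1,
      y γ ∈ Set.Ioo (0:ℝ) (Real.sqrt (2 / Real.pi)) ∧
      ∀ t ∈ Set.Ioi (0:ℝ), xiFn γ (y γ) ≤ xiFn γ t)
    (ε : ℝ) (hε : 0 < ε) :
    ∀ᶠ γ in nhdsWithin 0 (Set.Ioo (0:ℝ) 1),
      (y γ * Real.sqrt ((1-γ)/γ) - 1)^2 ≤ 2*ε ∧
      1/2 + c0 + Real.log ((1-γ)/γ) / 2 ≤ xiFn γ (y γ) ∧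
      xiFn γ (y γ) ≤ 1/2 + c0 + ε + Real.log ((1-γ)/γ) / 2 := by
  set T : ℝ := max 1 (1/Real.sqrt ε) with hTdef
  have hT : 1 ≤ T := le_max_left _ _
  have hT0 : 0 < T := by linarith
  have hTe : Real.log (1 + 1/T^2) ≤ ε := by
    have hsε : 0 < Real.sqrt ε := Real.sqrt_pos.2 hε
    have hTε : 1/Real.sqrt ε ≤ T := le_max_right _ _
    have hsq : (1/Real.sqrt ε)^2 = 1/ε := by
      rw [div_pow, one_pow, Real.sq_sqrt hε.le]
    have hT2 : 1/ε ≤ T^2 := by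
      rw [← hsq]
      apply pow_le_pow_left₀ (by positivity) hTε
    have h1T : 1/T^2 ≤ ε := by
      rw [div_le_iff₀ (by positivity)]
      rw [div_le_iff₀ hε] at hT2
      linarith
    calc Real.log (1 + 1/T^2) ≤ (1 + 1/T^2) - 1 :=
          Real.log_le_sub_one_of_pos (by positivity)
      _ = 1/T^2 := by ring
      _ ≤ ε := h1T
  filter_upwards [self_mem_nhdsWithin,
    (eventually_lt_nhds (show (0:ℝ) < 1/2 by norm_num)).filter_mono nhdsWithin_le_nhds,
    tendsto_D.eventually_ge_atTop
      (max (2*(1/2 - c0)) (2*(-Real.log (2*Phi (-T)) - c0)))] with γ hγ hhalf hD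
  obtain ⟨hyv, hmin⟩ := hy γ hγ
  have hDγ := max_le_iff.1 hD
  apply central γ ε T (y γ) hγ hε hT hyv hmin hTe
  · have hle1 : γ/(1-γ) ≤ 1 := by
      rw [div_le_one (by linarith [hγ.1, hγ.2] : (0:ℝ) < 1 - γ)]
      linarith
    calc Real.sqrt (γ/(1-γ)) ≤ Real.sqrt 1 := Real.sqrt_le_sqrt hle1
      _ = 1 := Real.sqrt_one
  · linarith [hDγ.1]
  · linarith [hDγ.2]

theorem stmt_18 (y : ℝ → ℝ)
    -- for each γ ∈ (0,1), `y γ` is the minimizer of `ξ_γ` on (0,∞),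
    -- lying in (0, √(2/π))
    (hy : ∀ γ ∈ Set.Ioo (0:ℝ) 1,
      y γ ∈ Set.Ioo (0:ℝ) (Real.sqrt (2 / Real.pi)) ∧
      ∀ t ∈ Set.Ioi (0:ℝ), xiFn γ (y γ) ≤ xiFn γ t) :
    Filter.Tendsto (fun γ => y γ / Real.sqrt (γ / (1 - γ)))
      (nhdsWithin 0 (Set.Ioo (0:ℝ) 1)) (nhds 1) ∧
    Filter.Tendsto (fun γ => xiFn γ (y γ) / ((1 / 2) * Real.log ((1 - γ) / γ)))
      (nhdsWithin 0 (Set.Ioo (0:ℝ) 1)) (nhds 1) := by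
  constructor
  · rw [Metric.tendsto_nhds]
    intro δ hδ
    have hε : (0:ℝ) < min (δ^2/8) 1 := lt_min (by positivity) one_pos
    filter_upwards [eventually_central y hy _ hε, self_mem_nhdsWithin] with γ hc hγ
    have hsq := hc.1
    have heq : y γ / Real.sqrt (γ/(1-γ)) = y γ * Real.sqrt ((1-γ)/γ) := by
      rw [div_eq_mul_inv, ← Real.sqrt_inv, inv_div]
    rw [Real.dist_eq, heq]
    have h1 : (y γ * Real.sqrt ((1-γ)/γ) - 1)^2 ≤ δ^2/4 := by
      have := min_le_left (δ^2/8) 1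
      linarith
    rw [abs_lt]
    constructor <;> nlinarith [sq_nonneg (y γ * Real.sqrt ((1-γ)/γ) - 1)]
  · have hev := eventually_central y hy 1 one_pos
    have hDhalf : Tendsto (fun γ : ℝ => Real.log ((1-γ)/γ) / 2)
        (nhdsWithin 0 (Set.Ioo (0:ℝ) 1)) atTop :=
      tendsto_D.atTop_div_const two_pos
    have hinv : Tendsto (fun γ : ℝ => (Real.log ((1-γ)/γ) / 2)⁻¹)
        (nhdsWithin 0 (Set.Ioo (0:ℝ) 1)) (nhds 0) := hDhalf.inv_tendsto_atTop
    have hlow : Tendsto (fun γ : ℝ => 1 + (1/2 + c0) * (Real.log ((1-γ)/γ) / 2)⁻¹)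
        (nhdsWithin 0 (Set.Ioo (0:ℝ) 1)) (nhds 1) := by
      have h := (tendsto_const_nhds (x := (1:ℝ)) (f := nhdsWithin (0:ℝ) (Set.Ioo (0:ℝ) 1))).add
        (hinv.const_mul (1/2 + c0))
      simpa using h
    have hupp : Tendsto (fun γ : ℝ => 1 + (3/2 + c0) * (Real.log ((1-γ)/γ) / 2)⁻¹)
        (nhdsWithin 0 (Set.Ioo (0:ℝ) 1)) (nhds 1) := by
      have h := (tendsto_const_nhds (x := (1:ℝ)) (f := nhdsWithin (0:ℝ) (Set.Ioo (0:ℝ) 1))).add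
        (hinv.const_mul (3/2 + c0))
      simpa using h
    have hexp : ∀ c d : ℝ, d ≠ 0 → (1 + c * d⁻¹) * d = d + c := by
      intro c d hd; field_simp
    apply tendsto_of_tendsto_of_tendsto_of_le_of_le' hlow hupp
    · filter_upwards [hev, hDhalf.eventually_gt_atTop 0] with γ hc hD0
      have hne : Real.log ((1-γ)/γ) / 2 ≠ 0 := hD0.ne'
      rw [show (1/2) * Real.log ((1-γ)/γ) = Real.log ((1-γ)/γ) / 2 by ring,
        le_div_iff₀ hD0]
      rw [hexp _ _ hne]
      linarith [hc.2.1]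
    · filter_upwards [hev, hDhalf.eventually_gt_atTop 0] with γ hc hD0
      have hne : Real.log ((1-γ)/γ) / 2 ≠ 0 := hD0.ne'
      rw [show (1/2) * Real.log ((1-γ)/γ) = Real.log ((1-γ)/γ) / 2 by ring,
        div_le_iff₀ hD0]
      rw [hexp _ _ hne]
      linarith [hc.2.2]
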